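/- Fix an even integer κ ≥ 4. For each n ∈ ℕ*, let E_n denote the unique real number for which the system T_κ(X_q) = T_κ(X_{n−q}) (for q = 0, …, ⌈n/2⌉ − 1 when n is odd, respectively q = 0, …, n/2 − 1 when n is even) together with X_{1+q}·X_{n−q} = E_n (for q = −1, 0, …, ⌈n/2⌉ − 1 when n is odd, respectively q = −1, 0, …, n/2 − 1 when n is even) admits a solution with cos²(π/κ) < E_n < cos(π/κ) and E_n = X₀ < X₁ < ⋯ < X_{(n−1)/2} < cos(π/κ) < X_{(n+1)/2} < ⋯ < X_n < X_{n+1} = 1 (n odd), respectively E_n = X₀ < X₁ < ⋯ < X_{n/2} = cos(π/κ) < X_{n/2+1} < ⋯ < X_n < X_{n+1} = 1 (n even). Then the sequence (E_n) is strictly decreasing: E_{n+1} < E_n for every n ∈ ℕ*. -/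
import Mathlib


open Real Filter

/-- Chebyshev polynomial of the first kind, as a real function. -/
noncomputable def chebT (n : ℕ) (x : ℝ) : ℝ := (Polynomial.Chebyshev.T ℝ n).eval x

/-- The odd system, together with `cos²(π/κ) < E < cos(π/κ)` and the chain
`E = X₀ < X₁ < ⋯ < X_{(n-1)/2} < cos(π/κ) < X_{(n+1)/2} < ⋯ < X_n < X_{n+1} = 1`. -/
def SolOdd (κ n : ℕ) (E : ℝ) (X : ℕ → ℝ) : Prop :=
  (∀ q ≤ (n - 1) / 2, chebT κ (X q) = chebT κ (X (n - q))) ∧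
  (∀ q ≤ (n + 1) / 2, X q * X (n + 1 - q) = E) ∧
  (Real.cos (π / κ) ^ 2 < E ∧ E < Real.cos (π / κ)) ∧
  X 0 = E ∧ X (n + 1) = 1 ∧
  (∀ q < n + 1, X q < X (q + 1)) ∧
  X ((n - 1) / 2) < Real.cos (π / κ) ∧ Real.cos (π / κ) < X ((n + 1) / 2)

/-- The even system, together with `cos²(π/κ) < E < cos(π/κ)` and the chain
`E = X₀ < X₁ < ⋯ < X_{n/2} = cos(π/κ) < X_{n/2+1} < ⋯ < X_n < X_{n+1} = 1`. -/
def SolEven (κ n : ℕ) (E : ℝ) (X : ℕ → ℝ) : Prop :=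
  (∀ q ≤ n / 2 - 1, chebT κ (X q) = chebT κ (X (n - q))) ∧
  (∀ q ≤ n / 2, X q * X (n + 1 - q) = E) ∧
  (Real.cos (π / κ) ^ 2 < E ∧ E < Real.cos (π / κ)) ∧
  X 0 = E ∧ X (n + 1) = 1 ∧ X (n / 2) = Real.cos (π / κ) ∧
  (∀ q < n + 1, X q < X (q + 1))

lemma cheb_branch (κ : ℕ) (hκ : 4 ≤ κ) {x y : ℝ}
    (hx1 : Real.cos (π / κ) ^ 2 < x) (hx2 : x < Real.cos (π / κ))
    (hy1 : Real.cos (π / κ) < y) (hy2 : y < 1)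
    (h : chebT κ x = chebT κ y) :
    y = Real.cos (2 * π / κ - Real.arccos x) := by
  have hκR : (4:ℝ) ≤ (κ:ℝ) := by exact_mod_cast hκ
  have hκ0 : (0:ℝ) < κ := by linarith
  have hpos : 0 < π / κ := div_pos pi_pos hκ0
  have hle : π / (κ:ℝ) ≤ π / 4 := by
    apply div_le_div_of_nonneg_left pi_pos.le (by norm_num) hκR
  have hc0 : 0 < Real.cos (π / κ) := by
    apply Real.cos_pos_of_mem_Ioo
    constructor <;> [linarith [pi_pos]; linarith [pi_pos]]
  have hc1 : Real.cos (π / κ) < 1 := by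
    have := Real.cos_lt_cos_of_nonneg_of_le_pi le_rfl (by linarith [pi_pos]) hpos
    simpa using this
  have hcos2 : Real.cos (2 * π / κ) = 2 * Real.cos (π / κ) ^ 2 - 1 := by
    have h2 : 2 * π / κ = 2 * (π / κ) := by ring
    rw [h2, Real.cos_two_mul]
  have hx0 : (0:ℝ) < x := lt_trans (by positivity) hx1
  have hx1' : x < 1 := lt_trans hx2 hc1
  set a := Real.arccos x with ha_def
  set b := Real.arccos y with hb_def
  have hcosa : Real.cos a = x := Real.cos_arccos (by linarith) hx1'.le
  have hcosb : Real.cos b = y := Real.cos_arccos (by linarith) hy2.le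
  have h2piκ : 2 * π / κ ≤ π / 2 := by
    rw [div_le_div_iff₀ hκ0 (by norm_num)]
    nlinarith [pi_pos]
  have haU : a < 2 * π / κ := by
    by_contra hcon
    push_neg at hcon
    have hc := Real.cos_le_cos_of_nonneg_of_le_pi (by positivity)
      (Real.arccos_le_pi x) hcon
    rw [hcosa, hcos2] at hc
    nlinarith
  have haL : π / κ < a := by
    by_contra hcon
    push_neg at hcon
    have hc := Real.cos_le_cos_of_nonneg_of_le_pi (Real.arccos_nonneg x)
      (by linarith [pi_pos]) hcon
    rw [hcosa] at hc
    linarith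
  have hb0 : 0 < b := Real.arccos_pos.mpr hy2
  have hbU : b < π / κ := by
    by_contra hcon
    push_neg at hcon
    have hc := Real.cos_le_cos_of_nonneg_of_le_pi hpos.le (Real.arccos_le_pi y) hcon
    rw [hcosb] at hc
    linarith
  -- rewrite chebT in terms of cos
  have hchx : chebT κ x = Real.cos (κ * a) := by
    rw [chebT, ← hcosa, Polynomial.Chebyshev.T_real_cos]
    push_cast
    ring_nf
  have hchy : chebT κ y = Real.cos (κ * b) := by
    rw [chebT, ← hcosb, Polynomial.Chebyshev.T_real_cos]
    push_cast
    ring_nf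
  rw [hchx, hchy] at h
  have hka1 : π < κ * a := by
    have := (mul_lt_mul_iff_right₀ hκ0).mpr haL
    rw [mul_div_cancel₀ _ (ne_of_gt hκ0)] at this
    linarith
  have hka2 : (κ:ℝ) * a < 2 * π := by
    have := (mul_lt_mul_iff_right₀ hκ0).mpr haU
    calc (κ:ℝ) * a < κ * (2 * π / κ) := this
    _ = 2 * π := by field_simp
  have hkb1 : 0 < (κ:ℝ) * b := by positivity
  have hkb2 : (κ:ℝ) * b < π := by
    have := (mul_lt_mul_iff_right₀ hκ0).mpr hbU
    calc (κ:ℝ) * b < κ * (π / κ) := this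
    _ = π := by field_simp
  have hu : Real.cos (2 * π - κ * a) = Real.cos (κ * b) := by
    rw [Real.cos_two_pi_sub]; exact h
  have huab : 2 * π - κ * a = κ * b :=
    Real.injOn_cos ⟨by linarith, by linarith⟩ ⟨hkb1.le, hkb2.le⟩ hu
  have hb : b = 2 * π / κ - a := by
    have hkb : (κ:ℝ) * b = (κ:ℝ) * (2 * π / κ - a) := by
      rw [← huab]; field_simp
    exact mul_left_cancel₀ (ne_of_gt hκ0) hkb
  rw [← hcosb, hb]

lemma arccos_mem (κ : ℕ) (hκ : 4 ≤ κ) {x : ℝ}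
    (hx1 : Real.cos (π / κ) ^ 2 < x) (hx2 : x < Real.cos (π / κ)) :
    π / κ < Real.arccos x ∧ Real.arccos x < 2 * π / κ := by
  have hκR : (4:ℝ) ≤ (κ:ℝ) := by exact_mod_cast hκ
  have hκ0 : (0:ℝ) < κ := by linarith
  have hpos : 0 < π / κ := div_pos pi_pos hκ0
  have hle : π / (κ:ℝ) ≤ π / 4 := by
    apply div_le_div_of_nonneg_left pi_pos.le (by norm_num) hκR
  have hc0 : 0 < Real.cos (π / κ) := by
    apply Real.cos_pos_of_mem_Ioo
    constructor <;> [linarith [pi_pos]; linarith [pi_pos]]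
  have hc1 : Real.cos (π / κ) < 1 := by
    have := Real.cos_lt_cos_of_nonneg_of_le_pi le_rfl (by linarith [pi_pos]) hpos
    simpa using this
  have hcos2 : Real.cos (2 * π / κ) = 2 * Real.cos (π / κ) ^ 2 - 1 := by
    have h2 : 2 * π / κ = 2 * (π / κ) := by ring
    rw [h2, Real.cos_two_mul]
  have hx0 : (0:ℝ) < x := lt_trans (by positivity) hx1
  have hx1' : x < 1 := lt_trans hx2 hc1
  have hcosa : Real.cos (Real.arccos x) = x := Real.cos_arccos (by linarith) hx1'.le
  constructor
  · by_contra hcon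
    push_neg at hcon
    have hc := Real.cos_le_cos_of_nonneg_of_le_pi (Real.arccos_nonneg x)
      (by linarith [pi_pos]) hcon
    rw [hcosa] at hc
    linarith
  · by_contra hcon
    push_neg at hcon
    have hc := Real.cos_le_cos_of_nonneg_of_le_pi (by positivity)
      (Real.arccos_le_pi x) hcon
    rw [hcosa, hcos2] at hc
    nlinarith

lemma comp_step (κ : ℕ) (hκ : 4 ≤ κ) {E E' x x' z z' : ℝ}
    (hE0 : 0 < E) (hEE' : E ≤ E')
    (hx1 : Real.cos (π / κ) ^ 2 < x) (hx2 : x < Real.cos (π / κ))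
    (hx1' : Real.cos (π / κ) ^ 2 < x') (hx2' : x' < Real.cos (π / κ))
    (hxx' : x ≤ x')
    (hz : z * Real.cos (2 * π / κ - Real.arccos x) = E)
    (hz' : z' * Real.cos (2 * π / κ - Real.arccos x') = E')
    (hY : Real.cos (π / κ) < Real.cos (2 * π / κ - Real.arccos x))
    (hY' : Real.cos (π / κ) < Real.cos (2 * π / κ - Real.arccos x')) :
    z ≤ z' := by
  have hκR : (4:ℝ) ≤ (κ:ℝ) := by exact_mod_cast hκ
  have hκ0 : (0:ℝ) < κ := by linarith
  have hpos : 0 < π / κ := div_pos pi_pos hκ0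
  have hle : π / (κ:ℝ) ≤ π / 4 := by
    apply div_le_div_of_nonneg_left pi_pos.le (by norm_num) hκR
  have hc0 : 0 < Real.cos (π / κ) := by
    apply Real.cos_pos_of_mem_Ioo
    constructor <;> [linarith [pi_pos]; linarith [pi_pos]]
  obtain ⟨hA1, hA2⟩ := arccos_mem κ hκ hx1 hx2
  obtain ⟨hA1', hA2'⟩ := arccos_mem κ hκ hx1' hx2'
  have harc : Real.arccos x' ≤ Real.arccos x := by
    unfold Real.arccos
    linarith [Real.monotone_arcsin hxx']
  -- cos (2π/κ - arccos x') ≤ cos (2π/κ - arccos x)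
  have hYY : Real.cos (2 * π / κ - Real.arccos x') ≤
      Real.cos (2 * π / κ - Real.arccos x) := by
    have h2 : 2 * π / (κ:ℝ) = 2 * (π / κ) := by ring
    apply Real.cos_le_cos_of_nonneg_of_le_pi
    · linarith
    · linarith [Real.arccos_nonneg x', pi_pos]
    · linarith
  have hYpos : 0 < Real.cos (2 * π / κ - Real.arccos x) := lt_trans hc0 hY
  have hYpos' : 0 < Real.cos (2 * π / κ - Real.arccos x') := lt_trans hc0 hY'
  -- z = E / Y ≤ E' / Y' = z'
  nlinarith [mul_pos hYpos hYpos']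

lemma key_step (κ : ℕ) (hκ : 4 ≤ κ) {E x y z : ℝ}
    (hE1 : Real.cos (π / κ) ^ 2 < E)
    (hxE : E ≤ x) (hx2 : x < Real.cos (π / κ))
    (hy1 : Real.cos (π / κ) < y) (hy2 : y < 1)
    (hcheb : chebT κ x = chebT κ y)
    (hprod : z * y = E) :
    z * Real.cos (2 * π / κ - Real.arccos x) = E ∧
      Real.cos (π / κ) < Real.cos (2 * π / κ - Real.arccos x) := by
  have hb := cheb_branch κ hκ (lt_of_lt_of_le hE1 hxE) hx2 hy1 hy2 hcheb
  rw [← hb]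
  exact ⟨hprod, hy1⟩

lemma chain_lt {X : ℕ → ℝ} {n : ℕ} (h : ∀ q < n + 1, X q < X (q + 1)) :
    ∀ i j, i < j → j ≤ n + 1 → X i < X j := by
  intro i j hij hj
  induction j with
  | zero => omega
  | succ j ih =>
    rcases Nat.lt_succ_iff_lt_or_eq.mp hij with h' | h'
    · exact lt_trans (ih h' (by omega)) (h j (by omega))
    · subst h'; exact h i (by omega)

lemma chain_le {X : ℕ → ℝ} {n : ℕ} (h : ∀ q < n + 1, X q < X (q + 1)) :
    ∀ i j, i ≤ j → j ≤ n + 1 → X i ≤ X j := by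
  intro i j hij hj
  rcases eq_or_lt_of_le hij with rfl | h'
  · exact le_rfl
  · exact (chain_lt h i j h' hj).le

/-- The energies `E_n` of the odd/even systems form a strictly decreasing sequence. -/
theorem energies_strict_decreasing (κ : ℕ) (hκ : 4 ≤ κ) (hke : Even κ)
    (E : ℕ → ℝ) (X : ℕ → ℕ → ℝ)
    (hsol : ∀ n : ℕ, 1 ≤ n →
      (Odd n → SolOdd κ n (E n) (X n)) ∧ (Even n → SolEven κ n (E n) (X n))) :
    ∀ n : ℕ, 1 ≤ n → E (n + 1) < E n := by
  intro n hn
  by_contra hcon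
  push_neg at hcon
  have hκR : (4:ℝ) ≤ (κ:ℝ) := by exact_mod_cast hκ
  have hκ0R : (0:ℝ) < κ := by linarith
  have hpos : 0 < π / (κ:ℝ) := div_pos pi_pos hκ0R
  have hle : π / (κ:ℝ) ≤ π / 4 :=
    div_le_div_of_nonneg_left pi_pos.le (by norm_num) hκR
  have hc0 : 0 < Real.cos (π / κ) := by
    apply Real.cos_pos_of_mem_Ioo
    constructor <;> [linarith [pi_pos]; linarith [pi_pos]]
  have hc2 : (0:ℝ) < Real.cos (π / κ) ^ 2 := by positivity
  rcases Nat.even_or_odd n with hev | hod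
  · -- n even, n = k + k with k ≥ 1
    obtain ⟨k, hk⟩ := hev
    have hk1 : 1 ≤ k := by omega
    obtain ⟨hT, hP, ⟨hE1, hE2⟩, hX0, hXtop, hmid, hchain⟩ := (hsol n hn).2 ⟨k, hk⟩
    obtain ⟨hT', hP', ⟨hE1', hE2'⟩, hX0', hXtop', hchain', hlow', hhigh'⟩ :=
      (hsol (n+1) (by omega)).1 ⟨k, by omega⟩
    have hmidk : X n k = Real.cos (π / κ) := by
      rwa [show n / 2 = k by omega] at hmid
    have hlowk : X (n+1) k < Real.cos (π / κ) := by
      rwa [show (n + 1 - 1) / 2 = k by omega] at hlow'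
    have hhighk : Real.cos (π / κ) < X (n+1) (k+1) := by
      rwa [show (n + 1 + 1) / 2 = k + 1 by omega] at hhigh'
    have hEle : ∀ q, q ≤ n + 1 → E n ≤ X n q := by
      intro q hq; rw [← hX0]; exact chain_le hchain 0 q (by omega) hq
    have hEle' : ∀ q, q ≤ n + 2 → E (n+1) ≤ X (n+1) q := by
      intro q hq; rw [← hX0']; exact chain_le hchain' 0 q (by omega) hq
    have stepn : ∀ q, q ≤ k - 1 →
        X n (q+1) * Real.cos (2 * π / κ - Real.arccos (X n q)) = E n ∧
        Real.cos (π / κ) < Real.cos (2 * π / κ - Real.arccos (X n q)) := by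
      intro q hq
      have h2 : X n q < Real.cos (π / κ) := by
        rw [← hmidk]; exact chain_lt hchain q k (by omega) (by omega)
      have h3 : Real.cos (π / κ) < X n (n - q) := by
        rw [← hmidk]; exact chain_lt hchain k (n - q) (by omega) (by omega)
      have h4 : X n (n - q) < 1 := by
        rw [← hXtop]; exact chain_lt hchain (n - q) (n + 1) (by omega) (by omega)
      have h5 : chebT κ (X n q) = chebT κ (X n (n - q)) := hT q (by omega)
      have h6 : X n (q+1) * X n (n - q) = E n := by
        have := hP (q+1) (by omega)
        rwa [show n + 1 - (q + 1) = n - q by omega] at this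
      exact key_step κ hκ hE1 (hEle q (by omega)) h2 h3 h4 h5 h6
    have stepn1 : ∀ q, q ≤ k - 1 →
        X (n+1) (q+1) * Real.cos (2 * π / κ - Real.arccos (X (n+1) q)) = E (n+1) ∧
        Real.cos (π / κ) < Real.cos (2 * π / κ - Real.arccos (X (n+1) q)) := by
      intro q hq
      have h2 : X (n+1) q < Real.cos (π / κ) := by
        calc X (n+1) q ≤ X (n+1) k := chain_le hchain' q k (by omega) (by omega)
        _ < _ := hlowk
      have h3 : Real.cos (π / κ) < X (n+1) (n + 1 - q) := by
        calc Real.cos (π / κ) < X (n+1) (k+1) := hhighk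
        _ ≤ X (n+1) (n + 1 - q) := chain_le hchain' (k+1) (n + 1 - q) (by omega) (by omega)
      have h4 : X (n+1) (n + 1 - q) < 1 := by
        rw [← hXtop']
        exact chain_lt hchain' (n + 1 - q) (n + 2) (by omega) (by omega)
      have h5 : chebT κ (X (n+1) q) = chebT κ (X (n+1) (n + 1 - q)) := hT' q (by omega)
      have h6 : X (n+1) (q+1) * X (n+1) (n + 1 - q) = E (n+1) := by
        have := hP' (q+1) (by omega)
        rwa [show n + 1 + 1 - (q + 1) = n + 1 - q by omega] at this
      exact key_step κ hκ hE1' (hEle' q (by omega)) h2 h3 h4 h5 h6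
    have main : ∀ q, q ≤ k → X n q ≤ X (n+1) q := by
      intro q
      induction q with
      | zero => intro _; rw [hX0, hX0']; exact hcon
      | succ q ih =>
        intro hq
        have hq' : q ≤ k - 1 := by omega
        obtain ⟨hs1, hs2⟩ := stepn q hq'
        obtain ⟨hs1', hs2'⟩ := stepn1 q hq'
        have hx2 : X n q < Real.cos (π / κ) := by
          rw [← hmidk]; exact chain_lt hchain q k (by omega) (by omega)
        have hx2' : X (n+1) q < Real.cos (π / κ) := by
          calc X (n+1) q ≤ X (n+1) k := chain_le hchain' q k (by omega) (by omega)
          _ < _ := hlowk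
        exact comp_step κ hκ (lt_trans hc2 hE1) hcon
          (lt_of_lt_of_le hE1 (hEle q (by omega))) hx2
          (lt_of_lt_of_le hE1' (hEle' q (by omega))) hx2'
          (ih (by omega)) hs1 hs1' hs2 hs2'
    have := main k le_rfl
    rw [hmidk] at this
    linarith
  · -- n odd, n = 2k + 1
    obtain ⟨k, hk⟩ := hod
    obtain ⟨hT, hP, ⟨hE1, hE2⟩, hX0, hXtop, hchain, hlow, hhigh⟩ := (hsol n hn).1 ⟨k, hk⟩
    obtain ⟨hT', hP', ⟨hE1', hE2'⟩, hX0', hXtop', hmid', hchain'⟩ :=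
      (hsol (n+1) (by omega)).2 ⟨k+1, by omega⟩
    have hlowk : X n k < Real.cos (π / κ) := by
      rwa [show (n - 1) / 2 = k by omega] at hlow
    have hhighk : Real.cos (π / κ) < X n (k+1) := by
      rwa [show (n + 1) / 2 = k + 1 by omega] at hhigh
    have hmidk : X (n+1) (k+1) = Real.cos (π / κ) := by
      rwa [show (n + 1) / 2 = k + 1 by omega] at hmid'
    have hEle : ∀ q, q ≤ n + 1 → E n ≤ X n q := by
      intro q hq; rw [← hX0]; exact chain_le hchain 0 q (by omega) hq
    have hEle' : ∀ q, q ≤ n + 2 → E (n+1) ≤ X (n+1) q := by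
      intro q hq; rw [← hX0']; exact chain_le hchain' 0 q (by omega) hq
    have stepn : ∀ q, q ≤ k →
        X n (q+1) * Real.cos (2 * π / κ - Real.arccos (X n q)) = E n ∧
        Real.cos (π / κ) < Real.cos (2 * π / κ - Real.arccos (X n q)) := by
      intro q hq
      have h2 : X n q < Real.cos (π / κ) := by
        calc X n q ≤ X n k := chain_le hchain q k (by omega) (by omega)
        _ < _ := hlowk
      have h3 : Real.cos (π / κ) < X n (n - q) := by
        calc Real.cos (π / κ) < X n (k+1) := hhighk
        _ ≤ X n (n - q) := chain_le hchain (k+1) (n - q) (by omega) (by omega)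
      have h4 : X n (n - q) < 1 := by
        rw [← hXtop]; exact chain_lt hchain (n - q) (n + 1) (by omega) (by omega)
      have h5 : chebT κ (X n q) = chebT κ (X n (n - q)) := hT q (by omega)
      have h6 : X n (q+1) * X n (n - q) = E n := by
        have := hP (q+1) (by omega)
        rwa [show n + 1 - (q + 1) = n - q by omega] at this
      exact key_step κ hκ hE1 (hEle q (by omega)) h2 h3 h4 h5 h6
    have stepn1 : ∀ q, q ≤ k →
        X (n+1) (q+1) * Real.cos (2 * π / κ - Real.arccos (X (n+1) q)) = E (n+1) ∧
        Real.cos (π / κ) < Real.cos (2 * π / κ - Real.arccos (X (n+1) q)) := by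
      intro q hq
      have h2 : X (n+1) q < Real.cos (π / κ) := by
        rw [← hmidk]; exact chain_lt hchain' q (k+1) (by omega) (by omega)
      have h3 : Real.cos (π / κ) < X (n+1) (n + 1 - q) := by
        rw [← hmidk]
        exact chain_lt hchain' (k+1) (n + 1 - q) (by omega) (by omega)
      have h4 : X (n+1) (n + 1 - q) < 1 := by
        rw [← hXtop']
        exact chain_lt hchain' (n + 1 - q) (n + 2) (by omega) (by omega)
      have h5 : chebT κ (X (n+1) q) = chebT κ (X (n+1) (n + 1 - q)) := hT' q (by omega)
      have h6 : X (n+1) (q+1) * X (n+1) (n + 1 - q) = E (n+1) := by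
        have := hP' (q+1) (by omega)
        rwa [show n + 1 + 1 - (q + 1) = n + 1 - q by omega] at this
      exact key_step κ hκ hE1' (hEle' q (by omega)) h2 h3 h4 h5 h6
    have main : ∀ q, q ≤ k + 1 → X n q ≤ X (n+1) q := by
      intro q
      induction q with
      | zero => intro _; rw [hX0, hX0']; exact hcon
      | succ q ih =>
        intro hq
        have hq' : q ≤ k := by omega
        obtain ⟨hs1, hs2⟩ := stepn q hq'
        obtain ⟨hs1', hs2'⟩ := stepn1 q hq'
        have hx2 : X n q < Real.cos (π / κ) := by
          calc X n q ≤ X n k := chain_le hchain q k (by omega) (by omega)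
          _ < _ := hlowk
        have hx2' : X (n+1) q < Real.cos (π / κ) := by
          rw [← hmidk]; exact chain_lt hchain' q (k+1) (by omega) (by omega)
        exact comp_step κ hκ (lt_trans hc2 hE1) hcon
          (lt_of_lt_of_le hE1 (hEle q (by omega))) hx2
          (lt_of_lt_of_le hE1' (hEle' q (by omega))) hx2'
          (ih (by omega)) hs1 hs1' hs2 hs2'
    have := main (k+1) le_rfl
    rw [hmidk] at this
    linarith
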